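/- For A ∈ ℝ^{m×n} with m = m₁m₂, n = n₁n₂: if σ₁ is the largest singular value of 𝓡(A) with corresponding unit left and right singular vectors u, v, then the matrices B, C defined by vec(B) = σ₁ u and vec(C) = v minimize ‖A − B ⊗ C‖_F over all B ∈ ℝ^{m₁×n₁}, C ∈ ℝ^{m₂×n₂}. -/

import Mathlib

open Matrix
open scoped Kronecker BigOperators

/-- The Frobenius norm of a real matrix. -/
noncomputable def frobNorm {α β : Type*} [Fintype α] [Fintype β]
    (M : Matrix α β ℝ) : ℝ :=
  Real.sqrt (∑ i, ∑ j, (M i j) ^ 2)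

/-- The Van Loan–Pitsianis rearrangement operator `𝓡`. -/
def rearrange {m₁ m₂ n₁ n₂ : ℕ}
    (A : Matrix (Fin m₁ × Fin m₂) (Fin n₁ × Fin n₂) ℝ) :
    Matrix (Fin m₁ × Fin n₁) (Fin m₂ × Fin n₂) ℝ :=
  fun p q => A (p.1, q.1) (p.2, q.2)

lemma expand_aux {α β : Type*} [Fintype α] [Fintype β]
    (R : Matrix α β ℝ) (x : α → ℝ) (y : β → ℝ) :
    ∑ p, ∑ q, (R p q - x p * y q) ^ 2 =
      (∑ p, ∑ q, (R p q) ^ 2) - 2 * (x ⬝ᵥ R.mulVec y)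
        + (∑ p, (x p) ^ 2) * (∑ q, (y q) ^ 2) := by
  have h : ∀ p q, (R p q - x p * y q) ^ 2
      = (R p q) ^ 2 - 2 * (x p * (R p q * y q)) + (x p) ^ 2 * (y q) ^ 2 := by
    intros; ring
  simp_rw [h, Finset.sum_add_distrib, Finset.sum_sub_distrib]
  rw [Finset.sum_mul_sum]
  simp [dotProduct, mulVec, Finset.mul_sum]

lemma reindex_aux {m₁ m₂ n₁ n₂ : ℕ}
    (A : Matrix (Fin m₁ × Fin m₂) (Fin n₁ × Fin n₂) ℝ)
    (B : Matrix (Fin m₁) (Fin n₁) ℝ) (C : Matrix (Fin m₂) (Fin n₂) ℝ) :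
    ∑ i, ∑ j, ((A - B ⊗ₖ C) i j) ^ 2 =
      ∑ p, ∑ q, (rearrange A p q - B p.1 p.2 * C q.1 q.2) ^ 2 := by
  simp only [Fintype.sum_prod_type, Matrix.sub_apply, kroneckerMap_apply, rearrange]
  exact Finset.sum_congr rfl fun i₁ _ => Finset.sum_comm

/-- If `σ₁` is the largest singular value of `𝓡(A)` with corresponding unit left and
right singular vectors `u`, `v`, then `B`, `C` defined by `vec(B) = σ₁ u` and
`vec(C) = v` minimize `‖A − B ⊗ C‖_F`. -/
theorem nearest_kronecker_product {m₁ m₂ n₁ n₂ : ℕ}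
    (A : Matrix (Fin m₁ × Fin m₂) (Fin n₁ × Fin n₂) ℝ)
    (σ₁ : ℝ) (u : Fin m₁ × Fin n₁ → ℝ) (v : Fin m₂ × Fin n₂ → ℝ)
    (hσ₁ : 0 ≤ σ₁)
    (hu : ∑ p, (u p) ^ 2 = 1) (hv : ∑ q, (v q) ^ 2 = 1)
    (hright : (rearrange A).mulVec v = σ₁ • u)
    (hleft : (rearrange A)ᵀ.mulVec u = σ₁ • v)
    (hmax : ∀ (x : Fin m₁ × Fin n₁ → ℝ) (y : Fin m₂ × Fin n₂ → ℝ),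
      x ⬝ᵥ (rearrange A).mulVec y ≤
        σ₁ * Real.sqrt (∑ p, (x p) ^ 2) * Real.sqrt (∑ q, (y q) ^ 2))
    (B : Matrix (Fin m₁) (Fin n₁) ℝ) (C : Matrix (Fin m₂) (Fin n₂) ℝ)
    (hB : ∀ i j, B i j = σ₁ * u (i, j)) (hC : ∀ k l, C k l = v (k, l)) :
    ∀ (B' : Matrix (Fin m₁) (Fin n₁) ℝ) (C' : Matrix (Fin m₂) (Fin n₂) ℝ),
      frobNorm (A - B ⊗ₖ C) ≤ frobNorm (A - B' ⊗ₖ C') := by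
  intro B' C'
  set R := rearrange A with hR
  set x : Fin m₁ × Fin n₁ → ℝ := fun p => B' p.1 p.2 with hx
  set y : Fin m₂ × Fin n₂ → ℝ := fun q => C' q.1 q.2 with hy
  unfold frobNorm
  apply Real.sqrt_le_sqrt
  rw [reindex_aux A B C, reindex_aux A B' C']
  have hBx : ∀ p : Fin m₁ × Fin n₁, B p.1 p.2 = σ₁ * u p := fun p => hB p.1 p.2
  have hCy : ∀ q : Fin m₂ × Fin n₂, C q.1 q.2 = v q := fun q => hC q.1 q.2
  simp_rw [hBx, hCy]
  -- the optimal value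
  have huu : u ⬝ᵥ u = 1 := by simpa [dotProduct, ← sq] using hu
  have huRv : (fun p => σ₁ * u p) ⬝ᵥ R.mulVec v = σ₁ ^ 2 := by
    have h1 : (fun p => σ₁ * u p) = σ₁ • u := rfl
    rw [h1, hright, smul_dotProduct, dotProduct_smul, huu]
    simp [sq]
  have hL : ∑ p, ∑ q, (R p q - (σ₁ * u p) * v q) ^ 2
      = (∑ p, ∑ q, (R p q) ^ 2) - σ₁ ^ 2 := by
    rw [expand_aux R (fun p => σ₁ * u p) v, huRv]
    simp_rw [mul_pow]
    rw [← Finset.mul_sum, hu, hv]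
    ring
  rw [hL]
  -- the general lower bound
  rw [expand_aux R x y]
  set a := Real.sqrt (∑ p, (x p) ^ 2) with ha
  set b := Real.sqrt (∑ q, (y q) ^ 2) with hb
  have hxa : ∑ p, (x p) ^ 2 = a ^ 2 :=
    (Real.sq_sqrt (Finset.sum_nonneg fun p _ => sq_nonneg _)).symm
  have hyb : ∑ q, (y q) ^ 2 = b ^ 2 :=
    (Real.sq_sqrt (Finset.sum_nonneg fun q _ => sq_nonneg _)).symm
  have ht := hmax x y
  rw [hxa, hyb]
  nlinarith [sq_nonneg (a * b - σ₁)]
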